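/- Let K be a field of characteristic 0 and S(u,v,w) ∈ K[u,v,w] a homogeneous polynomial of degree k satisfying the identity S(t13+t23, t14+t24, t34) - S(t12+t13, t14, t24+t34) + S(t12, t13+t14, t23+t24) = S(t23, t24, t34) + S(t12, t13, t23) in the polynomial ring K[t12,t13,t14,t23,t24,t34]. Then ∂_u ∂_w S = 0. -/

import Mathlib

open MvPolynomial

lemma vec6_0 {α : Type*} (a b c d e f : α) : (![a,b,c,d,e,f]) (0:Fin 6) = a := rfl
lemma vec6_1 {α : Type*} (a b c d e f : α) : (![a,b,c,d,e,f]) (1:Fin 6) = b := rfl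
lemma vec6_2 {α : Type*} (a b c d e f : α) : (![a,b,c,d,e,f]) (2:Fin 6) = c := rfl
lemma vec6_3 {α : Type*} (a b c d e f : α) : (![a,b,c,d,e,f]) (3:Fin 6) = d := rfl
lemma vec6_4 {α : Type*} (a b c d e f : α) : (![a,b,c,d,e,f]) (4:Fin 6) = e := rfl
lemma vec6_5 {α : Type*} (a b c d e f : α) : (![a,b,c,d,e,f]) (5:Fin 6) = f := rfl

lemma pderiv_rename_zero {σ τ R : Type*} [CommSemiring R] [DecidableEq τ]
    {f : σ → τ} {j : τ} (h : ∀ x, f x ≠ j) (p : MvPolynomial σ R) :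
    pderiv j (rename f p) = 0 := by
  induction p using MvPolynomial.induction_on with
  | C a => simp
  | add p q hp hq => simp [hp, hq]
  | mul_X p i hp => simp [hp, pderiv_X, Pi.single_apply, h i]

lemma aeval_aeval_vec {K : Type*} [CommSemiring K] (σ : Fin 6 → MvPolynomial (Fin 6) K)
    (S : MvPolynomial (Fin 3) K) (a b c : MvPolynomial (Fin 6) K) :
    aeval σ (aeval ![a, b, c] S) = aeval ![aeval σ a, aeval σ b, aeval σ c] S := by
  rw [comp_aeval_apply]
  have : (fun i => aeval σ (![a, b, c] i)) = ![aeval σ a, aeval σ b, aeval σ c] := by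
    funext i; fin_cases i <;> rfl
  rw [this]

lemma aeval_vec_rename {K : Type*} [CommSemiring K] (S : MvPolynomial (Fin 3) K)
    (f : Fin 3 → Fin 6) :
    aeval ![(X (f 0) : MvPolynomial (Fin 6) K), X (f 1), X (f 2)] S = rename f S := by
  rw [rename_eq_aeval]
  have : (X ∘ f : Fin 3 → MvPolynomial (Fin 6) K)
      = ![(X (f 0) : MvPolynomial (Fin 6) K), X (f 1), X (f 2)] := by
    funext i; fin_cases i <;> rfl
  rw [this]


/-- Variables of `MvPolynomial (Fin 6) K` are `X 0 = t12`, `X 1 = t13`, `X 2 = t14`,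
`X 3 = t23`, `X 4 = t24`, `X 5 = t34`.  If a homogeneous polynomial `S(u,v,w)` of degree `k`
satisfies the pentagon-type identity
`S(t13+t23, t14+t24, t34) - S(t12+t13, t14, t24+t34) + S(t12, t13+t14, t23+t24)
  = S(t23, t24, t34) + S(t12, t13, t23)`,
then `∂_u ∂_w S = 0`. -/
theorem mixed_partial_vanishes_of_cocycle
    (K : Type*) [Field K] [CharZero K] (k : ℕ) (S : MvPolynomial (Fin 3) K)
    (hhom : S.IsHomogeneous k)
    (hid :
      (aeval ![X 1 + X 3, X 2 + X 4, X 5] S : MvPolynomial (Fin 6) K)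
        - aeval ![X 0 + X 1, X 2, X 4 + X 5] S
        + aeval ![X 0, X 1 + X 2, X 3 + X 4] S
      = aeval ![X 3, X 4, X 5] S + aeval ![X 0, X 1, X 3] S) :
    pderiv 0 (pderiv 2 S) = 0 := by
  -- Step 1: kill t13, t14, t24  ⇒  S(X0, 0, X5) = 0
  have h2 := congrArg (aeval (R := K) (S₁ := MvPolynomial (Fin 6) K)
      ![X 0, 0, 0, X 3, 0, X 5]) hid
  simp only [map_add, map_sub, aeval_aeval_vec, aeval_X, map_zero,
    vec6_0, vec6_1, vec6_2, vec6_3, vec6_4, vec6_5,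
    Matrix.cons_val_zero, Matrix.cons_val_one, Matrix.head_cons, Matrix.cons_val_two,
    Matrix.tail_cons, add_zero, zero_add] at h2
  have hB : (aeval ![X 0, 0, X 5] S : MvPolynomial (Fin 6) K) = 0 := by
    linear_combination -h2
  -- transported copies of hB
  have hB1 : (aeval ![X 3, 0, X 5] S : MvPolynomial (Fin 6) K) = 0 := by
    have := congrArg (aeval (R := K) (S₁ := MvPolynomial (Fin 6) K)
        ![X 3, X 1, X 2, X 3, X 4, X 5]) hB
    rw [aeval_aeval_vec] at this
    simpa only [aeval_X, map_zero, vec6_0, vec6_1, vec6_2, vec6_3, vec6_4, vec6_5] using this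
  have hB2 : (aeval ![X 0, 0, X 3] S : MvPolynomial (Fin 6) K) = 0 := by
    have := congrArg (aeval (R := K) (S₁ := MvPolynomial (Fin 6) K)
        ![X 0, X 1, X 2, X 3, X 4, X 3]) hB
    rw [aeval_aeval_vec] at this
    simpa only [aeval_X, map_zero, vec6_0, vec6_1, vec6_2, vec6_3, vec6_4, vec6_5] using this
  -- Step 2: kill t13, t24
  have h1 := congrArg (aeval (R := K) (S₁ := MvPolynomial (Fin 6) K)
      ![X 0, 0, X 2, X 3, 0, X 5]) hid
  simp only [map_add, map_sub, aeval_aeval_vec, aeval_X, map_zero,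
    vec6_0, vec6_1, vec6_2, vec6_3, vec6_4, vec6_5, add_zero, zero_add] at h1
  rw [hB1, hB2, add_zero] at h1
  -- rewrite as renames
  have e1 : (aeval ![X 3, X 2, X 5] S : MvPolynomial (Fin 6) K)
      = rename ![3, 2, 5] S := aeval_vec_rename S ![3,2,5]
  have e2 : (aeval ![X 0, X 2, X 5] S : MvPolynomial (Fin 6) K)
      = rename ![0, 2, 5] S := aeval_vec_rename S ![0,2,5]
  have e3 : (aeval ![X 0, X 2, X 3] S : MvPolynomial (Fin 6) K)
      = rename ![0, 2, 3] S := aeval_vec_rename S ![0,2,3]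
  rw [e1, e2, e3] at h1
  -- differentiate wrt X5
  have inj1 : Function.Injective (![3,2,5] : Fin 3 → Fin 6) := by decide
  have inj2 : Function.Injective (![0,2,5] : Fin 3 → Fin 6) := by decide
  have hd := congrArg (pderiv (R := K) 5) h1
  simp only [map_sub, map_add, map_zero] at hd
  have p1 : pderiv (R := K) 5 (rename (![3,2,5] : Fin 3 → Fin 6) S)
      = rename (![3,2,5] : Fin 3 → Fin 6) (pderiv 2 S) := pderiv_rename inj1 2 S
  have p2 : pderiv (R := K) 5 (rename (![0,2,5] : Fin 3 → Fin 6) S)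
      = rename (![0,2,5] : Fin 3 → Fin 6) (pderiv 2 S) := pderiv_rename inj2 2 S
  rw [p1, p2, pderiv_rename_zero (f := (![0,2,3] : Fin 3 → Fin 6)) (by decide), add_zero] at hd
  -- differentiate wrt X0
  have hd0 := congrArg (pderiv (R := K) 0) hd
  simp only [map_sub, map_zero] at hd0
  have p3 : pderiv (R := K) 0 (rename (![0,2,5] : Fin 3 → Fin 6) (pderiv 2 S))
      = rename (![0,2,5] : Fin 3 → Fin 6) (pderiv 0 (pderiv 2 S)) := pderiv_rename inj2 0 _
  rw [pderiv_rename_zero (f := (![3,2,5] : Fin 3 → Fin 6)) (by decide), p3] at hd0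
  have : rename (![0,2,5] : Fin 3 → Fin 6) (pderiv 0 (pderiv 2 S)) = 0 := by
    linear_combination -hd0
  have := rename_injective (R := K) (![0,2,5] : Fin 3 → Fin 6) inj2
  apply this
  simpa using ‹rename (![0,2,5] : Fin 3 → Fin 6) (pderiv 0 (pderiv 2 S)) = 0›
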